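/- Let K ⊆ ℝⁿ be a regular cone with dual K*, C₁ and C₂ strictly feasible sets defined by a two-term disjunction on K with c₁₀, c₂₀ ∈ {0, ±1}, C₁ ⊄ C₂ and C₂ ⊄ C₁. Then a linear inequality μᵀx ≥ μ₀ is valid for the closed convex hull of C₁ ∪ C₂ if and only if there exist α₁, α₂ ∈ K* and β₁, β₂ ≥ 0 such that μ = α₁ + β₁c₁ = α₂ + β₂c₂, β₁c₁₀ ≥ μ₀, and β₂c₂₀ ≥ μ₀. -/

import Mathlib

open Set

/-- Dot product on `Fin n → ℝ`. -/
def dot {n : ℕ} (c x : Fin n → ℝ) : ℝ := ∑ i, c i * x i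

/-- Dual cone of a set `K ⊆ ℝⁿ`. -/
def dualCone {n : ℕ} (K : Set (Fin n → ℝ)) : Set (Fin n → ℝ) :=
  {y | ∀ x ∈ K, 0 ≤ dot y x}

namespace Aux

variable {n : ℕ}

lemma dot_comm (a b : Fin n → ℝ) : dot a b = dot b a := by
  unfold dot; exact Finset.sum_congr rfl fun i _ => mul_comm _ _

lemma dot_zero_left (x : Fin n → ℝ) : dot 0 x = 0 := by simp [dot]

lemma dot_zero_right (c : Fin n → ℝ) : dot c 0 = 0 := by simp [dot]

lemma dot_add_left (a b x : Fin n → ℝ) : dot (a + b) x = dot a x + dot b x := by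
  unfold dot; rw [← Finset.sum_add_distrib]
  exact Finset.sum_congr rfl fun i _ => by simp [add_mul]

lemma dot_smul_left (t : ℝ) (a x : Fin n → ℝ) : dot (t • a) x = t * dot a x := by
  unfold dot; rw [Finset.mul_sum]
  exact Finset.sum_congr rfl fun i _ => by simp [mul_assoc]

lemma dot_neg_left (a x : Fin n → ℝ) : dot (-a) x = -dot a x := by
  have : -a = (-1 : ℝ) • a := by funext i; simp
  rw [this, dot_smul_left]; ring

lemma dot_add_right (c x y : Fin n → ℝ) : dot c (x + y) = dot c x + dot c y := by
  rw [dot_comm, dot_add_left, dot_comm x c, dot_comm y c]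

lemma dot_smul_right (c : Fin n → ℝ) (t : ℝ) (x : Fin n → ℝ) :
    dot c (t • x) = t * dot c x := by
  rw [dot_comm, dot_smul_left, dot_comm x c]

lemma dot_self_pos {c : Fin n → ℝ} (hc : c ≠ 0) : 0 < dot c c := by
  have h0 : 0 ≤ dot c c := Finset.sum_nonneg fun i _ => mul_self_nonneg _
  rcases h0.lt_or_eq with h | h
  · exact h
  · exfalso; apply hc
    have := (Finset.sum_eq_zero_iff_of_nonneg
      (fun i (_ : i ∈ Finset.univ) => mul_self_nonneg (c i))).mp h.symm
    funext i
    have h2 := this i (Finset.mem_univ i)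
    simp only [Pi.zero_apply]
    nlinarith [h2]

lemma continuous_dot_right (c : Fin n → ℝ) : Continuous fun x : Fin n → ℝ => dot c x := by
  unfold dot
  exact continuous_finset_sum _ fun i _ => (continuous_const.mul (continuous_apply i))

/-- The pairing on `(Fin n → ℝ) × ℝ`. -/
def pr (y z : (Fin n → ℝ) × ℝ) : ℝ := dot y.1 z.1 + y.2 * z.2

lemma pr_comm (y z : (Fin n → ℝ) × ℝ) : pr y z = pr z y := by
  unfold pr; rw [dot_comm, mul_comm]

lemma pr_zero_left (z : (Fin n → ℝ) × ℝ) : pr 0 z = 0 := by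
  simp [pr, dot_zero_left]

lemma pr_add_left (a b z : (Fin n → ℝ) × ℝ) : pr (a + b) z = pr a z + pr b z := by
  simp only [pr, Prod.fst_add, Prod.snd_add, dot_add_left]; ring

lemma pr_smul_left (t : ℝ) (a z : (Fin n → ℝ) × ℝ) : pr (t • a) z = t * pr a z := by
  simp only [pr, Prod.smul_fst, Prod.smul_snd, dot_smul_left, smul_eq_mul]; ring

lemma pr_neg_left (a z : (Fin n → ℝ) × ℝ) : pr (-a) z = -pr a z := by
  simp only [pr, Prod.fst_neg, Prod.snd_neg, dot_neg_left]; ring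

lemma continuous_pr_right (w : (Fin n → ℝ) × ℝ) : Continuous fun z => pr w z := by
  unfold pr
  exact ((continuous_dot_right w.1).comp continuous_fst).add
    (continuous_const.mul continuous_snd)

lemma continuous_pr_left (z : (Fin n → ℝ) × ℝ) : Continuous fun w => pr w z := by
  have : (fun w => pr w z) = fun w => pr z w := by funext w; rw [pr_comm]
  rw [this]; exact continuous_pr_right z

end Aux

namespace Aux

/-- Separation of a point from a closed convex cone in `(Fin n → ℝ) × ℝ`. -/
lemma sep_cone {n : ℕ} (S : Set ((Fin n → ℝ) × ℝ)) (hconv : Convex ℝ S) (hcl : IsClosed S)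
    (hcone : ∀ z ∈ S, ∀ t : ℝ, 0 ≤ t → t • z ∈ S) (h0 : (0 : (Fin n → ℝ) × ℝ) ∈ S)
    {y : (Fin n → ℝ) × ℝ} (hy : y ∉ S) :
    ∃ w, (∀ z ∈ S, pr w z ≤ 0) ∧ 0 < pr w y := by
  obtain ⟨f, u, hfs, hfy⟩ := geometric_hahn_banach_closed_point hconv hcl hy
  have hu : 0 < u := by have := hfs 0 h0; simpa using this
  have hzle : ∀ z ∈ S, f z ≤ 0 := by
    intro z hz
    by_contra hpos
    push_neg at hpos
    have ht : ∀ t : ℝ, 0 ≤ t → t * f z < u := by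
      intro t ht
      have := hfs _ (hcone z hz t ht)
      simpa [map_smul] using this
    have := ht ((u + 1) / f z) (by positivity)
    rw [div_mul_cancel₀ _ (ne_of_gt hpos)] at this
    linarith
  -- represent f by a vector
  set w : (Fin n → ℝ) × ℝ := ((fun i => f ((fun j => if i = j then 1 else 0), 0)), f (0, 1))
    with hw
  have hrep : ∀ z, pr w z = f z := by
    intro z
    have hsplit : z = (z.1, 0) + (0, z.2) := by ext <;> simp
    have h2 : f (0, z.2) = z.2 * f (0, 1) := by
      have : ((0 : Fin n → ℝ), z.2) = z.2 • ((0 : Fin n → ℝ), 1) := by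
        ext <;> simp
      rw [this, map_smul]; rfl
    have h1 : f (z.1, 0) = dot w.1 z.1 := by
      set g : (Fin n → ℝ) →ₗ[ℝ] ℝ := f.toLinearMap.comp (LinearMap.inl ℝ (Fin n → ℝ) ℝ)
        with hg
      have hgz : g z.1 = f (z.1, 0) := rfl
      rw [← hgz, LinearMap.pi_apply_eq_sum_univ g z.1]
      unfold dot
      refine Finset.sum_congr rfl fun i _ => ?_
      have : g (fun j => if i = j then 1 else 0) = w.1 i := rfl
      rw [smul_eq_mul, this, mul_comm]
    have hw2 : w.2 = f (0, 1) := rfl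
    calc pr w z = dot w.1 z.1 + w.2 * z.2 := rfl
      _ = f (z.1, 0) + f (0, z.2) := by rw [h1, h2, hw2]; ring
      _ = f z := by rw [← map_add, ← hsplit]
  refine ⟨w, fun z hz => ?_, ?_⟩
  · rw [hrep]; exact hzle z hz
  · rw [hrep]; linarith

end Aux

namespace Aux

/-- Key lemma: dual of the intersection of a closed convex cone with a halfspace
through the origin, under a Slater condition. -/
lemma key {n : ℕ} (P : Set ((Fin n → ℝ) × ℝ)) (hPcl : IsClosed P) (hPconv : Convex ℝ P)
    (hPcone : ∀ z ∈ P, ∀ t : ℝ, 0 ≤ t → t • z ∈ P) (h0P : (0 : (Fin n → ℝ) × ℝ) ∈ P)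
    (h zb : (Fin n → ℝ) × ℝ) (hzb : zb ∈ interior P) (hhzb : 0 < pr h zb)
    (y : (Fin n → ℝ) × ℝ) (hy : ∀ z ∈ P, 0 ≤ pr h z → 0 ≤ pr y z) :
    ∃ (p : (Fin n → ℝ) × ℝ) (β : ℝ), (∀ z ∈ P, 0 ≤ pr p z) ∧ 0 ≤ β ∧ y = p + β • h := by
  classical
  set Pd : Set ((Fin n → ℝ) × ℝ) := {p | ∀ z ∈ P, 0 ≤ pr p z} with hPd
  set S : Set ((Fin n → ℝ) × ℝ) :=
    {w | ∃ p ∈ Pd, ∃ β : ℝ, 0 ≤ β ∧ w = p + β • h} with hS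
  suffices hyS : y ∈ S by
    obtain ⟨p, hp, β, hβ, hEq⟩ := hyS
    exact ⟨p, β, hp, hβ, hEq⟩
  by_contra hyS
  -- S is a closed convex cone containing 0
  have h0S : (0 : (Fin n → ℝ) × ℝ) ∈ S :=
    ⟨0, fun z _ => by rw [pr_zero_left], 0, le_rfl, by simp⟩
  have hSconv : Convex ℝ S := by
    rintro w₁ ⟨p₁, hp₁, β₁, hβ₁, rfl⟩ w₂ ⟨p₂, hp₂, β₂, hβ₂, rfl⟩ a b ha hb hab
    refine ⟨a • p₁ + b • p₂, fun z hz => ?_, a * β₁ + b * β₂, by positivity, ?_⟩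
    · rw [pr_add_left, pr_smul_left, pr_smul_left]
      have := hp₁ z hz; have := hp₂ z hz; positivity
    · module
  have hScone : ∀ w ∈ S, ∀ t : ℝ, 0 ≤ t → t • w ∈ S := by
    rintro w ⟨p, hp, β, hβ, rfl⟩ t ht
    refine ⟨t • p, fun z hz => ?_, t * β, by positivity, by module⟩
    rw [pr_smul_left]
    exact mul_nonneg ht (hp z hz)
  have hzbP : zb ∈ P := interior_subset hzb
  have hScl : IsClosed S := by
    apply IsSeqClosed.isClosed
    intro seq w hmem hlim
    choose pk hpk βk hβk hEq using hmem
    -- pr (seq k) zb converges, hence is bounded above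
    have hcont : Filter.Tendsto (fun k => pr (seq k) zb) Filter.atTop (nhds (pr w zb)) :=
      ((continuous_pr_left zb).continuousAt.tendsto.comp hlim)
    obtain ⟨M, hM⟩ := hcont.bddAbove_range
    have hMk : ∀ k, pr (seq k) zb ≤ M := fun k => hM (Set.mem_range_self k)
    -- β k is bounded
    have hβbd : ∀ k, βk k ≤ M / pr h zb := by
      intro k
      have h1 : pr (seq k) zb = pr (pk k) zb + βk k * pr h zb := by
        rw [hEq k, pr_add_left, pr_smul_left]
      have h2 : 0 ≤ pr (pk k) zb := hpk k zb hzbP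
      have h3 : βk k * pr h zb ≤ M := by
        have := hMk k; linarith
      rw [le_div_iff₀ hhzb]
      exact h3
    obtain ⟨β, hβmem, φ, hφ, hβlim⟩ :=
      (isCompact_Icc (a := (0:ℝ)) (b := M / pr h zb)).tendsto_subseq
        (x := βk) (fun k => ⟨hβk k, hβbd k⟩)
    -- the p's along the subsequence converge to w - β • h
    have hplim : Filter.Tendsto (fun k => pk (φ k)) Filter.atTop (nhds (w - β • h)) := by
      have : (fun k => pk (φ k)) = fun k => seq (φ k) - (βk (φ k)) • h := by
        funext k; rw [hEq (φ k)]; abel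
      rw [this]
      exact ((hlim.comp hφ.tendsto_atTop)).sub (hβlim.smul_const h)
    have hpmem : (w - β • h) ∈ Pd := by
      intro z hz
      have : Filter.Tendsto (fun k => pr (pk (φ k)) z) Filter.atTop (nhds (pr (w - β • h) z)) :=
        (continuous_pr_left z).continuousAt.tendsto.comp hplim
      exact ge_of_tendsto' this (fun k => hpk (φ k) z hz)
    exact ⟨w - β • h, hpmem, β, hβmem.1, by abel⟩
  -- separate y from S
  obtain ⟨w, hw1, hw2⟩ := sep_cone S hSconv hScl hScone h0S hyS
  set v := -w with hv
  have hvPd : ∀ p ∈ Pd, 0 ≤ pr p v := by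
    intro p hp
    have hpS : p ∈ S := ⟨p, hp, 0, le_rfl, by simp⟩
    have := hw1 p hpS
    rw [pr_comm p v, hv, pr_neg_left]
    linarith
  have hvP : v ∈ P := by
    by_contra hvP
    obtain ⟨w₂, hw₂1, hw₂2⟩ := sep_cone P hPconv hPcl hPcone h0P hvP
    have : -w₂ ∈ Pd := fun z hz => by rw [pr_neg_left]; linarith [hw₂1 z hz]
    have := hvPd _ this
    rw [pr_neg_left] at this
    linarith
  have hvh : 0 ≤ pr h v := by
    have hhS : h ∈ S := ⟨0, fun z _ => by rw [pr_zero_left], 1, zero_le_one, by simp⟩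
    have := hw1 h hhS
    rw [pr_comm h v, hv, pr_neg_left]
    linarith
  have := hy v hvP hvh
  rw [pr_comm y v, hv, pr_neg_left] at this
  linarith

end Aux

namespace Aux

lemma farkas_one {n : ℕ} (K : Set (Fin n → ℝ)) (hKclosed : IsClosed K) (hKconv : Convex ℝ K)
    (hKcone : ∀ x ∈ K, ∀ t : ℝ, 0 ≤ t → t • x ∈ K)
    (c : Fin n → ℝ) (c₀ : ℝ)
    (hsf : ({x ∈ K | c₀ ≤ dot c x} ∩ interior K).Nonempty)
    (μ : Fin n → ℝ) (μ₀ : ℝ)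
    (hvalid : ∀ x ∈ K, c₀ ≤ dot c x → μ₀ ≤ dot μ x) :
    ∃ (α : Fin n → ℝ) (β : ℝ), α ∈ dualCone K ∧ 0 ≤ β ∧ μ = α + β • c ∧ μ₀ ≤ β * c₀ := by
  obtain ⟨xb, ⟨hxbK, hxbc⟩, hxbint⟩ := hsf
  have h0K : (0 : Fin n → ℝ) ∈ K := by
    have := hKcone xb hxbK 0 le_rfl; simpa using this
  -- generic fact: along any recession direction, μ has nonneg value
  have hgrow : ∀ x : Fin n → ℝ, (∀ s : ℝ, 0 ≤ s → μ₀ ≤ dot μ xb + s * dot μ x) →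
      0 ≤ dot μ x := by
    intro x hs
    by_contra hneg
    push_neg at hneg
    set d := dot μ x with hd
    have hdneg : 0 < -d := by linarith
    have hdne : d ≠ 0 := ne_of_lt hneg
    set s := (|μ₀| + |dot μ xb| + 1) / (-d) with hs'
    have hs0 : 0 ≤ s := by positivity
    have := hs s hs0
    have hsd : s * d = -(|μ₀| + |dot μ xb| + 1) := by
      rw [hs', div_mul_eq_mul_div, mul_div_assoc, div_neg, div_self hdne]
      ring
    rw [hsd] at this
    have h1 := le_abs_self μ₀
    have h2 := neg_abs_le (dot μ xb)
    have h3 := le_abs_self (dot μ xb)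
    have h4 := neg_abs_le μ₀
    linarith
  have hsumK : ∀ a b : Fin n → ℝ, a ∈ K → b ∈ K → a + b ∈ K := by
    intro a b ha hb
    have h2 := hKconv ha hb (by norm_num : (0:ℝ) ≤ 1/2) (by norm_num : (0:ℝ) ≤ 1/2)
      (by norm_num)
    have := hKcone _ h2 2 (by norm_num)
    have heq : (2:ℝ) • ((1/2 : ℝ) • a + (1/2 : ℝ) • b) = a + b := by module
    rwa [heq] at this
  by_cases hc : c = 0
  · -- then the constraint is vacuous and K = C
    subst hc
    have hc₀ : c₀ ≤ 0 := by simpa [dot_zero_left] using hxbc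
    have hvalid' : ∀ x ∈ K, μ₀ ≤ dot μ x := fun x hx =>
      hvalid x hx (by simpa [dot_zero_left] using hc₀)
    refine ⟨μ, 0, ?_, le_rfl, by simp, ?_⟩
    · intro x hx
      apply hgrow
      intro s hs0
      have hmem : xb + s • x ∈ K := hsumK _ _ hxbK (hKcone x hx s hs0)
      have := hvalid' _ hmem
      rwa [dot_add_right, dot_smul_right] at this
    · have := hvalid' 0 h0K
      rw [dot_zero_right] at this
      linarith
  · -- Slater point with strict inequality
    obtain ⟨ε, hε, hball⟩ := Metric.isOpen_iff.mp isOpen_interior xb hxbint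
    have hcc : 0 < dot c c := dot_self_pos hc
    have hcnorm : 0 < ‖c‖ := norm_pos_iff.mpr hc
    set δ := ε / (2 * ‖c‖) with hδ
    have hδ0 : 0 < δ := by positivity
    set xh := xb + δ • c with hxh
    have hxhint : xh ∈ interior K := by
      apply hball
      rw [Metric.mem_ball, dist_eq_norm]
      have : xh - xb = δ • c := by rw [hxh]; abel
      rw [this, norm_smul, Real.norm_eq_abs, abs_of_pos hδ0, hδ]
      rw [div_mul_eq_mul_div, mul_comm]
      rw [div_lt_iff₀ (by positivity)]
      nlinarith
    have hxhc : c₀ < dot c xh := by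
      rw [hxh, dot_add_right, dot_smul_right]
      nlinarith
    -- apply the key lemma in dimension n+1
    set P : Set ((Fin n → ℝ) × ℝ) := K ×ˢ Ici (0:ℝ) with hP
    have hPcl : IsClosed P := hKclosed.prod isClosed_Ici
    have hPconv : Convex ℝ P := hKconv.prod (convex_Ici 0)
    have hPcone : ∀ z ∈ P, ∀ t : ℝ, 0 ≤ t → t • z ∈ P := by
      rintro ⟨z1, z2⟩ ⟨hz1, hz2⟩ t ht
      exact ⟨hKcone z1 hz1 t ht, mul_nonneg ht hz2⟩
    have h0P : (0 : (Fin n → ℝ) × ℝ) ∈ P := ⟨h0K, by simp⟩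
    set hvec : (Fin n → ℝ) × ℝ := (c, -c₀) with hhvec
    set zb : (Fin n → ℝ) × ℝ := (xh, 1) with hzb
    have hzbint : zb ∈ interior P := by
      rw [hP, interior_prod_eq]
      exact ⟨hxhint, by simp [hzb]⟩
    have hhzb : 0 < pr hvec zb := by
      simp only [pr, hhvec, hzb]
      linarith
    set y : (Fin n → ℝ) × ℝ := (μ, -μ₀) with hy
    have hyQ : ∀ z ∈ P, 0 ≤ pr hvec z → 0 ≤ pr y z := by
      rintro ⟨z1, z2⟩ ⟨hz1, hz2⟩ hprh
      simp only [pr, hhvec, hy] at hprh ⊢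
      rcases lt_or_eq_of_le (Set.mem_Ici.mp hz2) with hz2pos | hz2eq
      · have hx : z2⁻¹ • z1 ∈ K := hKcone z1 hz1 _ (by positivity)
        have hcx : c₀ ≤ dot c (z2⁻¹ • z1) := by
          rw [dot_smul_right]
          rw [le_inv_mul_iff₀ hz2pos]
          linarith
        have := hvalid _ hx hcx
        rw [dot_smul_right, le_inv_mul_iff₀ hz2pos] at this
        linarith
      · -- z2 = 0 : recession direction
        have hz2' : z2 = 0 := hz2eq.symm
        subst hz2'
        simp only [mul_zero, add_zero] at hprh ⊢
        apply hgrow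
        intro s hs0
        have hmem : xb + s • z1 ∈ K := hsumK _ _ hxbK (hKcone z1 hz1 s hs0)
        have hcm : c₀ ≤ dot c (xb + s • z1) := by
          rw [dot_add_right, dot_smul_right]
          nlinarith
        have := hvalid _ hmem hcm
        rwa [dot_add_right, dot_smul_right] at this
    obtain ⟨p, β, hpPd, hβ, hyEq⟩ :=
      key P hPcl hPconv hPcone h0P hvec zb hzbint hhzb y hyQ
    refine ⟨p.1, β, ?_, hβ, ?_, ?_⟩
    · intro x hx
      have := hpPd (x, 0) ⟨hx, by simp⟩
      simpa [pr] using this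
    · have := congrArg Prod.fst hyEq
      simpa [hy, hhvec] using this
    · have hr : 0 ≤ p.2 := by
        have := hpPd (0, 1) ⟨h0K, by simp⟩
        simpa [pr, dot_zero_right] using this
      have := congrArg Prod.snd hyEq
      simp only [hy, hhvec, Prod.snd_add, Prod.smul_snd, smul_eq_mul] at this
      nlinarith

end Aux

theorem stmt_3 {n : ℕ} (K : Set (Fin n → ℝ))
    (hKclosed : IsClosed K) (hKconv : Convex ℝ K)
    (hKcone : ∀ x ∈ K, ∀ t : ℝ, 0 ≤ t → t • x ∈ K)
    (hKpointed : ∀ x, x ∈ K → -x ∈ K → x = 0)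
    (hKfull : (interior K).Nonempty)
    (c₁ c₂ : Fin n → ℝ) (c₁₀ c₂₀ : ℝ)
    (hc₁₀ : c₁₀ = 0 ∨ c₁₀ = 1 ∨ c₁₀ = -1)
    (hc₂₀ : c₂₀ = 0 ∨ c₂₀ = 1 ∨ c₂₀ = -1)
    (C₁ C₂ : Set (Fin n → ℝ))
    (hC₁ : C₁ = {x ∈ K | c₁₀ ≤ dot c₁ x})
    (hC₂ : C₂ = {x ∈ K | c₂₀ ≤ dot c₂ x})
    (h12 : ¬ C₁ ⊆ C₂) (h21 : ¬ C₂ ⊆ C₁)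
    (hsf₁ : (C₁ ∩ interior K).Nonempty) (hsf₂ : (C₂ ∩ interior K).Nonempty)
    (μ : Fin n → ℝ) (μ₀ : ℝ) :
    (∀ x ∈ closure (convexHull ℝ (C₁ ∪ C₂)), μ₀ ≤ dot μ x) ↔
      ∃ α₁ α₂ : Fin n → ℝ, ∃ β₁ β₂ : ℝ,
        α₁ ∈ dualCone K ∧ α₂ ∈ dualCone K ∧ 0 ≤ β₁ ∧ 0 ≤ β₂ ∧
        μ = α₁ + β₁ • c₁ ∧ μ = α₂ + β₂ • c₂ ∧
        μ₀ ≤ β₁ * c₁₀ ∧ μ₀ ≤ β₂ * c₂₀ := by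
  constructor
  · intro hvalid
    have hsub : C₁ ∪ C₂ ⊆ closure (convexHull ℝ (C₁ ∪ C₂)) :=
      (subset_convexHull ℝ _).trans subset_closure
    have hv1 : ∀ x ∈ K, c₁₀ ≤ dot c₁ x → μ₀ ≤ dot μ x := fun x hx hcx =>
      hvalid x (hsub (Or.inl (hC₁ ▸ ⟨hx, hcx⟩)))
    have hv2 : ∀ x ∈ K, c₂₀ ≤ dot c₂ x → μ₀ ≤ dot μ x := fun x hx hcx =>
      hvalid x (hsub (Or.inr (hC₂ ▸ ⟨hx, hcx⟩)))
    obtain ⟨α₁, β₁, hα₁, hβ₁, hμ₁, hb₁⟩ :=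
      Aux.farkas_one K hKclosed hKconv hKcone c₁ c₁₀ (hC₁ ▸ hsf₁) μ μ₀ hv1
    obtain ⟨α₂, β₂, hα₂, hβ₂, hμ₂, hb₂⟩ :=
      Aux.farkas_one K hKclosed hKconv hKcone c₂ c₂₀ (hC₂ ▸ hsf₂) μ μ₀ hv2
    exact ⟨α₁, α₂, β₁, β₂, hα₁, hα₂, hβ₁, hβ₂, hμ₁, hμ₂, hb₁, hb₂⟩
  · rintro ⟨α₁, α₂, β₁, β₂, hα₁, hα₂, hβ₁, hβ₂, hμ₁, hμ₂, hb₁, hb₂⟩ x hx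
    set T : Set (Fin n → ℝ) := {x | μ₀ ≤ dot μ x} with hT
    have hTconv : Convex ℝ T :=
      convex_halfSpace_ge ⟨Aux.dot_add_right μ, fun t x => Aux.dot_smul_right μ t x⟩ μ₀
    have hTcl : IsClosed T := isClosed_le continuous_const (Aux.continuous_dot_right μ)
    have hsubT : C₁ ∪ C₂ ⊆ T := by
      rintro z (hz | hz)
      · rw [hC₁] at hz
        obtain ⟨hzK, hzc⟩ := hz
        have h1 : dot μ z = dot α₁ z + β₁ * dot c₁ z := by
          rw [hμ₁, Aux.dot_add_left, Aux.dot_smul_left]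
        have h2 : β₁ * c₁₀ ≤ β₁ * dot c₁ z := mul_le_mul_of_nonneg_left hzc hβ₁
        have h3 := hα₁ z hzK
        simp only [hT, mem_setOf_eq]
        linarith
      · rw [hC₂] at hz
        obtain ⟨hzK, hzc⟩ := hz
        have h1 : dot μ z = dot α₂ z + β₂ * dot c₂ z := by
          rw [hμ₂, Aux.dot_add_left, Aux.dot_smul_left]
        have h2 : β₂ * c₂₀ ≤ β₂ * dot c₂ z := mul_le_mul_of_nonneg_left hzc hβ₂
        have h3 := hα₂ z hzK
        simp only [hT, mem_setOf_eq]
        linarith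
    exact closure_minimal (convexHull_min hsubT hTconv) hTcl hx
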